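/- Let X be a Banach space and let C ⊆ X be a weakly compact, convex set having the Opial property. Suppose T : C → C is α-nonexpansive for some multi-index α = (α₁, …, α_{n₀}) (with α₁ > 0, α_{n₀} > 0, α_j ≥ 0 for all j, and α₁ + ⋯ + α_{n₀} = 1), and T is asymptotically regular at some point x ∈ C. Then the sequence of iterates (Tⁿx)ₙ converges weakly to a fixed point of T. -/

import Mathlib

open Filter Topology

/-- A sequence `u` converges weakly to `y` in a normed space. -/
def WeakConvSeq {X : Type*} [NormedAddCommGroup X] [NormedSpace ℝ X]
    (u : ℕ → X) (y : X) : Prop :=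
  ∀ f : X →L[ℝ] ℝ, Filter.Tendsto (fun n => f (u n)) Filter.atTop (nhds (f y))

/-- A subset `C` has the Opial property. -/
def OpialSet {X : Type*} [NormedAddCommGroup X] [NormedSpace ℝ X] (C : Set X) : Prop :=
  ∀ (u : ℕ → X) (u₀ : X), (∀ n, u n ∈ C) → WeakConvSeq u u₀ →
    ∀ v : X, v ≠ u₀ →
      Filter.liminf (fun n => ‖u n - u₀‖) Filter.atTop <
        Filter.liminf (fun n => ‖u n - v‖) Filter.atTop

section AuxWC

variable {X : Type*} [NormedAddCommGroup X] [NormedSpace ℝ X]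

lemma aux_fun_bound (C : Set X) (hK : IsCompact (toWeakSpace ℝ X '' C))
    (f : X →L[ℝ] ℝ) : ∃ M, ∀ w ∈ C, |f w| ≤ M := by
  have hfc : Continuous fun q : WeakSpace ℝ X => f ((toWeakSpace ℝ X).symm q) :=
    WeakBilin.eval_continuous ((topDualPairing ℝ X).flip) f
  obtain ⟨M, hM⟩ := (hK.image hfc).isBounded.subset_closedBall 0
  refine ⟨M, fun w hw => ?_⟩
  have h1 : f ((toWeakSpace ℝ X).symm (toWeakSpace ℝ X w)) ∈
      (fun q : WeakSpace ℝ X => f ((toWeakSpace ℝ X).symm q)) '' (toWeakSpace ℝ X '' C) :=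
    Set.mem_image_of_mem _ (Set.mem_image_of_mem _ hw)
  have h2 := hM h1
  simp only [LinearEquiv.symm_apply_apply] at h2
  simpa [Real.dist_eq] using h2

lemma aux_extraction (C : Set X) (hK : IsCompact (toWeakSpace ℝ X '' C))
    (v : ℕ → X) (hv : ∀ n, v n ∈ C) :
    ∃ y ∈ C, ∃ φ : ℕ → ℕ, StrictMono φ ∧ WeakConvSeq (fun k => v (φ k)) y := by
  classical
  set S : Submodule ℝ X := Submodule.span ℝ (Set.range v) with hS
  have hsep : TopologicalSpace.IsSeparable (closure (S : Set X)) :=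
    ((Set.countable_range v).isSeparable.span).closure
  obtain ⟨D, hDc, hDd⟩ := hsep
  haveI : Countable D := hDc.to_subtype
  have hYclosed : IsClosed (toWeakSpace ℝ X '' closure (S : Set X)) := by
    rw [Convex.toWeakSpace_closure ℝ (S.convex)]
    exact isClosed_closure
  -- norming functionals for pairs of points of D
  have hsel : ∀ p : D × D, ∃ g : X →L[ℝ] ℝ, ‖g‖ ≤ 1 ∧
      g ((p.1 : X) - (p.2 : X)) = ‖(p.1 : X) - (p.2 : X)‖ := by
    intro p
    by_cases h : (p.1 : X) - (p.2 : X) = 0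
    · exact ⟨0, by simp, by simp [h]⟩
    · obtain ⟨g, hg1, hg2⟩ := exists_dual_vector ℝ _ (norm_ne_zero_iff.mpr h)
      exact ⟨g, le_of_eq hg1, by exact_mod_cast hg2⟩
  choose g hg1 hg2 using hsel
  -- the countable family (g p) separates points of the closure of S
  have hsepar : ∀ z w : X, z ∈ closure (S : Set X) → w ∈ closure (S : Set X) →
      (∀ p : D × D, g p z = g p w) → z = w := by
    intro z w hz hw hgzw
    by_contra hne
    have hzw : 0 < ‖z - w‖ := by
      rw [norm_pos_iff, sub_ne_zero]; exact hne
    obtain ⟨d, hdD, hd⟩ : ∃ d ∈ D, ‖z - d‖ < ‖z - w‖ / 8 := by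
      rcases Metric.mem_closure_iff.mp (hDd hz) (‖z - w‖ / 8) (by positivity) with ⟨d, hdD, hdd⟩
      exact ⟨d, hdD, by rwa [dist_eq_norm] at hdd⟩
    obtain ⟨e, heD, he⟩ : ∃ e ∈ D, ‖w - e‖ < ‖z - w‖ / 8 := by
      rcases Metric.mem_closure_iff.mp (hDd hw) (‖z - w‖ / 8) (by positivity) with ⟨e, heD, hee⟩
      exact ⟨e, heD, by rwa [dist_eq_norm] at hee⟩
    set p : D × D := (⟨d, hdD⟩, ⟨e, heD⟩) with hp
    have h1 : g p (d - e) = ‖d - e‖ := hg2 p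
    have h0 : g p (z - w) = 0 := by
      rw [map_sub, hgzw p, sub_self]
    have h2 : g p (d - e) = g p (z - w) + g p ((d - z) - (e - w)) := by
      rw [← map_add]; congr 1; abel
    have h3 : |g p ((d - z) - (e - w))| ≤ ‖z - w‖ / 4 := by
      calc |g p ((d - z) - (e - w))| ≤ ‖g p‖ * ‖(d - z) - (e - w)‖ := (g p).le_opNorm _
        _ ≤ 1 * (‖d - z‖ + ‖e - w‖) :=
            mul_le_mul (hg1 p) (norm_sub_le _ _) (norm_nonneg _) zero_le_one
        _ ≤ ‖z - w‖ / 4 := by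
            rw [one_mul, norm_sub_rev d z, norm_sub_rev e w]; linarith
    have h4 : ‖z - w‖ - ‖z - w‖ / 4 ≤ ‖d - e‖ := by
      have ht : ‖z - w‖ ≤ ‖z - d‖ + ‖d - e‖ + ‖e - w‖ := by
        calc ‖z - w‖ = ‖(z - d) + (d - e) + (e - w)‖ := by congr 1; abel
          _ ≤ ‖(z - d) + (d - e)‖ + ‖e - w‖ := norm_add_le _ _
          _ ≤ ‖z - d‖ + ‖d - e‖ + ‖e - w‖ := by
              gcongr; exact norm_add_le _ _
      rw [norm_sub_rev e w] at ht
      linarith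
    have h5 : ‖d - e‖ ≤ ‖z - w‖ / 4 := by
      rw [← h1, h2, h0, zero_add]
      exact (le_abs_self _).trans h3
    linarith
  -- uniform bounds for the functionals on C
  choose M hM using fun p : D × D => aux_fun_bound C hK (g p)
  -- diagonal extraction through a compact metrizable product
  have hPiComp : IsCompact (Set.univ.pi fun p : D × D => Set.Icc (-(M p)) (M p)) :=
    isCompact_univ_pi fun p => isCompact_Icc
  have hmemPi : ∀ n, (fun p : D × D => g p (v n)) ∈
      Set.univ.pi fun p : D × D => Set.Icc (-(M p)) (M p) := by
    intro n p _
    exact abs_le.mp (hM p _ (hv n))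
  obtain ⟨c, -, φ, hφ, hcφ⟩ := hPiComp.isSeqCompact (x := fun n => fun p : D × D => g p (v n))
    fun n => hmemPi n
  have hcoord : ∀ p : D × D, Tendsto (fun k => g p (v (φ k))) atTop (𝓝 (c p)) := by
    intro p
    exact (tendsto_pi_nhds.mp hcφ p)
  -- cluster point of the subsequence in the weakly compact set
  have hle : map (fun k => toWeakSpace ℝ X (v (φ k))) atTop ≤ 𝓟 (toWeakSpace ℝ X '' C) :=
    le_principal_iff.mpr (eventually_map.mpr (Eventually.of_forall
      fun k => Set.mem_image_of_mem _ (hv _)))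
  obtain ⟨yw, hywK, hyw⟩ := hK.exists_clusterPt hle
  obtain ⟨y, hyC, rfl⟩ := hywK
  refine ⟨y, hyC, φ, hφ, ?_⟩
  have hmemS : ∀ n, v n ∈ closure (S : Set X) :=
    fun n => subset_closure (Submodule.subset_span (Set.mem_range_self n))
  -- cluster points of subsequences are in the closure of S
  have hclusterS : ∀ (w : X) (σ : ℕ → ℕ),
      ClusterPt (toWeakSpace ℝ X w) (map (fun k => toWeakSpace ℝ X (v (σ k))) atTop) →
      w ∈ closure (S : Set X) := by
    intro w σ hcl
    have h1 : toWeakSpace ℝ X w ∈ toWeakSpace ℝ X '' closure (S : Set X) := by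
      rw [← hYclosed.closure_eq]
      refine mem_closure_iff_clusterPt.mpr (hcl.mono (le_principal_iff.mpr
        (eventually_map.mpr (Eventually.of_forall fun k => Set.mem_image_of_mem _ (hmemS _)))))
    obtain ⟨w', hw', hww'⟩ := h1
    rwa [← (toWeakSpace ℝ X).injective hww']
  -- functional evaluations transfer along cluster points
  have hclusterMap : ∀ (w : X) (σ : ℕ → ℕ) (f : X →L[ℝ] ℝ),
      ClusterPt (toWeakSpace ℝ X w) (map (fun k => toWeakSpace ℝ X (v (σ k))) atTop) →
      ClusterPt (f w) (map (fun k => f (v (σ k))) atTop) := by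
    intro w σ f hcl
    have hfc : Continuous fun q : WeakSpace ℝ X => f ((toWeakSpace ℝ X).symm q) :=
      WeakBilin.eval_continuous ((topDualPairing ℝ X).flip) f
    have h1 := hcl.map hfc.continuousAt (tendsto_map
      (f := fun q : WeakSpace ℝ X => f ((toWeakSpace ℝ X).symm q)))
    rw [Filter.map_map] at h1
    have h2 : ((fun q : WeakSpace ℝ X => f ((toWeakSpace ℝ X).symm q)) ∘
        fun k => toWeakSpace ℝ X (v (σ k))) = fun k => f (v (σ k)) := by
      funext k; simp
    have h3 : f ((toWeakSpace ℝ X).symm (toWeakSpace ℝ X w)) = f w := by simp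
    rwa [h2, h3] at h1
  have hclusterEval : ∀ (w : X) (σ : ℕ → ℕ) (f : X →L[ℝ] ℝ) (r : ℝ),
      ClusterPt (toWeakSpace ℝ X w) (map (fun k => toWeakSpace ℝ X (v (σ k))) atTop) →
      Tendsto (fun k => f (v (σ k))) atTop (𝓝 r) → f w = r := by
    intro w σ f r hcl htd
    have h1 := hclusterMap w σ f hcl
    have h2 : 𝓝 (f w) ⊓ map (fun k => f (v (σ k))) atTop ≤ 𝓝 (f w) ⊓ 𝓝 r :=
      inf_le_inf_left _ htd
    haveI : (𝓝 (f w) ⊓ map (fun k => f (v (σ k))) atTop).NeBot := h1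
    exact eq_of_nhds_neBot (neBot_of_le h2)
  have hgy : ∀ p : D × D, g p y = c p :=
    fun p => hclusterEval y φ (g p) (c p) hyw (hcoord p)
  have hyS : y ∈ closure (S : Set X) := hclusterS y φ hyw
  -- now prove weak convergence of the subsequence to y
  intro f
  by_contra hnot
  obtain ⟨ε, hε, hfreq⟩ : ∃ ε > 0, ∃ᶠ k in atTop, ε ≤ dist (f (v (φ k))) (f y) := by
    rw [Metric.tendsto_atTop] at hnot
    push_neg at hnot
    obtain ⟨ε, hεpos, hev⟩ := hnot
    exact ⟨ε, hεpos, frequently_atTop.mpr fun N => (hev N).imp fun n h => ⟨h.1, h.2⟩⟩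
  obtain ⟨ψ, hψ, hψP⟩ := extraction_of_frequently_atTop hfreq
  have hle2 : map (fun k => toWeakSpace ℝ X (v (φ (ψ k)))) atTop ≤ 𝓟 (toWeakSpace ℝ X '' C) :=
    le_principal_iff.mpr (eventually_map.mpr (Eventually.of_forall
      fun k => Set.mem_image_of_mem _ (hv _)))
  obtain ⟨zw, hzwK, hzw⟩ := hK.exists_clusterPt hle2
  obtain ⟨z, hzC, rfl⟩ := hzwK
  have hgz : ∀ p : D × D, g p z = c p := fun p =>
    hclusterEval z (fun k => φ (ψ k)) (g p) (c p) hzw ((hcoord p).comp hψ.tendsto_atTop)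
  have hzy : z = y :=
    hsepar z y (hclusterS z (fun k => φ (ψ k)) hzw) hyS fun p => (hgz p).trans (hgy p).symm
  have hcls : IsClosed {t : ℝ | ε ≤ dist t (f y)} :=
    isClosed_le continuous_const (continuous_id.dist continuous_const)
  have hmemcl : f z ∈ {t : ℝ | ε ≤ dist t (f y)} := by
    rw [← hcls.closure_eq]
    refine mem_closure_iff_clusterPt.mpr ((hclusterMap z (fun k => φ (ψ k)) f hzw).mono
      (le_principal_iff.mpr (eventually_map.mpr (Eventually.of_forall fun k => hψP k))))
  rw [hzy] at hmemcl
  simp only [Set.mem_setOf_eq, dist_self] at hmemcl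
  linarith

lemma aux_norm_bound [CompleteSpace X] (C : Set X)
    (hK : IsCompact (toWeakSpace ℝ X '' C)) : ∃ M, ∀ w ∈ C, ‖w‖ ≤ M := by
  have h1 : ∀ f : StrongDual ℝ X, ∃ M, ∀ i : C,
      ‖(NormedSpace.inclusionInDoubleDual ℝ X (i : X)) f‖ ≤ M := by
    intro f
    obtain ⟨M, hM⟩ := aux_fun_bound C hK f
    exact ⟨M, fun i => by simpa [NormedSpace.dual_def] using hM i i.2⟩
  obtain ⟨M, hM⟩ := banach_steinhaus h1
  refine ⟨M, fun w hw => ?_⟩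
  have h2 := hM ⟨w, hw⟩
  have h3 : ‖NormedSpace.inclusionInDoubleDual ℝ X w‖ = ‖w‖ :=
    (NormedSpace.inclusionInDoubleDualLi ℝ (E := X)).norm_map w
  rwa [h3] at h2

end AuxWC

theorem weak_convergence_of_mean_nonexpansive
    {X : Type*} [NormedAddCommGroup X] [NormedSpace ℝ X] [CompleteSpace X]
    (C : Set X) (hC_wcompact : IsCompact (toWeakSpace ℝ X '' C))
    (hC_convex : Convex ℝ C) (hC_opial : OpialSet C)
    (T : X → X) (hT : Set.MapsTo T C C)
    (n₀ : ℕ) (hn₀ : 0 < n₀) (α : Fin n₀ → ℝ)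
    (hα_nonneg : ∀ j, 0 ≤ α j)
    (hα_first : 0 < α ⟨0, hn₀⟩)
    (hα_last : 0 < α ⟨n₀ - 1, by omega⟩)
    (hα_sum : ∑ j, α j = 1)
    (hne : ∀ x ∈ C, ∀ y ∈ C,
      ∑ j : Fin n₀, α j * ‖T^[(j : ℕ) + 1] x - T^[(j : ℕ) + 1] y‖ ≤ ‖x - y‖)
    (x : X) (hx : x ∈ C)
    (har : Filter.Tendsto (fun n => ‖T^[n] x - T^[n + 1] x‖) Filter.atTop (nhds 0)) :
    ∃ y ∈ C, T y = y ∧ WeakConvSeq (fun n => T^[n] x) y := by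
  classical
  set u : ℕ → X := fun n => T^[n] x with hu
  have humem : ∀ n, u n ∈ C := by
    intro n
    induction n with
    | zero => exact hx
    | succ n ih =>
      have : u (n + 1) = T (u n) := by
        simp only [hu, Function.iterate_succ_apply']
      rw [this]; exact hT ih
  obtain ⟨Mc, hMc⟩ := aux_norm_bound C hC_wcompact
  -- asymptotic regularity for all gaps
  have hd : ∀ k, Tendsto (fun n => ‖u n - u (n + k)‖) atTop (𝓝 0) := by
    intro k
    induction k with
    | zero => simp
    | succ k ih =>
      have h2 : Tendsto (fun n => ‖u (n + k) - u (n + k + 1)‖) atTop (𝓝 0) := by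
        have h3 := har.comp (tendsto_add_atTop_nat k)
        exact h3
      have hsum := ih.add h2
      rw [add_zero] at hsum
      refine squeeze_zero (fun n => norm_nonneg _) (fun n => ?_) hsum
      calc ‖u n - u (n + (k + 1))‖ ≤ ‖u n - u (n + k)‖ + ‖u (n + k) - u (n + k + 1)‖ := by
            have := dist_triangle (u n) (u (n + k)) (u (n + k + 1))
            simpa [dist_eq_norm, ← add_assoc] using this
        _ = ‖u n - u (n + k)‖ + ‖u (n + k) - u (n + k + 1)‖ := rfl
  -- iterates shift the orbit
  have hiter : ∀ (m k : ℕ), T^[k] (u m) = u (m + k) := by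
    intro m k
    rw [hu]
    rw [← Function.iterate_add_apply, Nat.add_comm]
  -- Part (II): weak subsequential limits of the orbit are fixed points
  have hKey : ∀ σ : ℕ → ℕ, StrictMono σ → ∀ z, z ∈ C →
      WeakConvSeq (fun k => u (σ k)) z → T z = z := by
    intro σ hσ z hzC hwz
    by_contra hTz
    set ρ : X → ℝ := fun w => liminf (fun k => ‖u (σ k) - w‖) atTop with hρ
    have hBbelow : ∀ w : X, IsBoundedUnder (· ≥ ·) atTop (fun k => ‖u (σ k) - w‖) :=
      fun w => isBoundedUnder_of ⟨0, fun k => norm_nonneg _⟩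
    have hBabove : ∀ w : X, IsBoundedUnder (· ≤ ·) atTop (fun k => ‖u (σ k) - w‖) := by
      intro w
      refine isBoundedUnder_of ⟨Mc + ‖w‖, fun k => ?_⟩
      calc ‖u (σ k) - w‖ ≤ ‖u (σ k)‖ + ‖w‖ := norm_sub_le _ _
        _ ≤ Mc + ‖w‖ := by have := hMc _ (humem (σ k)); linarith
    have hopial : ∀ w : X, w ≠ z → ρ z < ρ w :=
      fun w hw => hC_opial _ z (fun k => humem _) hwz w hw
    have hρz_le : ∀ w : X, ρ z ≤ ρ w := by
      intro w
      rcases eq_or_ne w z with rfl | hw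
      · exact le_rfl
      · exact (hopial w hw).le
    have hSle : ∑ j : Fin n₀, α j * ρ (T^[(j : ℕ) + 1] z) ≤ ρ z := by
      refine le_of_forall_pos_le_add ?_
      intro ε hε
      have hev1 : ∀ᶠ k in atTop, ∀ j : Fin n₀,
          ρ (T^[(j : ℕ) + 1] z) - ε / 2 ≤ ‖u (σ k) - T^[(j : ℕ) + 1] z‖ := by
        rw [eventually_all]
        intro j
        have h := eventually_lt_of_lt_liminf
          (show ρ (T^[(j : ℕ) + 1] z) - ε / 2 < ρ (T^[(j : ℕ) + 1] z) by linarith)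
          (hBbelow (T^[(j : ℕ) + 1] z))
        exact h.mono fun k hk => hk.le
      have hev2 : ∀ᶠ k in atTop, ∀ j : Fin n₀,
          ‖u (σ k) - u (σ k + ((j : ℕ) + 1))‖ ≤ ε / 2 := by
        rw [eventually_all]
        intro j
        have h := (hd ((j : ℕ) + 1)).comp hσ.tendsto_atTop
        have h2 : ∀ᶠ k in atTop, ‖u (σ k) - u (σ k + ((j : ℕ) + 1))‖ < ε / 2 :=
          h.eventually_lt_const (by linarith)
        exact h2.mono fun k hk => hk.le
      have hev : ∀ᶠ k in atTop,
          (∑ j : Fin n₀, α j * ρ (T^[(j : ℕ) + 1] z)) - ε ≤ ‖u (σ k) - z‖ := by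
        filter_upwards [hev1, hev2] with k h1 h2
        have hbase := hne (u (σ k)) (humem (σ k)) z hzC
        have hbase' : ∑ j : Fin n₀, α j * ‖u (σ k + ((j : ℕ) + 1)) - T^[(j : ℕ) + 1] z‖
            ≤ ‖u (σ k) - z‖ := by
          refine le_trans (le_of_eq ?_) hbase
          refine Finset.sum_congr rfl fun j _ => ?_
          rw [hiter (σ k) ((j : ℕ) + 1)]
        have hterm : ∀ j : Fin n₀, α j * (ρ (T^[(j : ℕ) + 1] z) - ε)
            ≤ α j * ‖u (σ k + ((j : ℕ) + 1)) - T^[(j : ℕ) + 1] z‖ := by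
          intro j
          refine mul_le_mul_of_nonneg_left ?_ (hα_nonneg j)
          have hb : |‖u (σ k) - T^[(j : ℕ) + 1] z‖ -
              ‖u (σ k + ((j : ℕ) + 1)) - T^[(j : ℕ) + 1] z‖|
              ≤ ‖u (σ k) - u (σ k + ((j : ℕ) + 1))‖ := by
            have := abs_norm_sub_norm_le (u (σ k) - T^[(j : ℕ) + 1] z)
              (u (σ k + ((j : ℕ) + 1)) - T^[(j : ℕ) + 1] z)
            rwa [sub_sub_sub_cancel_right] at this
          have hb2 := (abs_le.mp hb).2
          have := h1 j
          have := h2 j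
          linarith
        calc (∑ j : Fin n₀, α j * ρ (T^[(j : ℕ) + 1] z)) - ε
            = ∑ j : Fin n₀, α j * (ρ (T^[(j : ℕ) + 1] z) - ε) := by
              simp only [mul_sub, Finset.sum_sub_distrib, ← Finset.sum_mul, hα_sum, one_mul]
          _ ≤ ∑ j : Fin n₀, α j * ‖u (σ k + ((j : ℕ) + 1)) - T^[(j : ℕ) + 1] z‖ :=
              Finset.sum_le_sum fun j _ => hterm j
          _ ≤ ‖u (σ k) - z‖ := hbase'
      have hll := le_liminf_of_le ((hBabove z).isCoboundedUnder_ge) hev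
      have : (∑ j : Fin n₀, α j * ρ (T^[(j : ℕ) + 1] z)) - ε ≤ ρ z := hll
      linarith
    -- lower bound for the sum
    set j₀ : Fin n₀ := ⟨0, hn₀⟩ with hj₀
    have hsplit : ∑ j : Fin n₀, α j * ρ (T^[(j : ℕ) + 1] z)
        = α j₀ * ρ (T z) + ∑ j ∈ Finset.univ.erase j₀, α j * ρ (T^[(j : ℕ) + 1] z) := by
      rw [← Finset.add_sum_erase _ _ (Finset.mem_univ j₀)]
      congr 2
    have hsum_erase : ∑ j ∈ Finset.univ.erase j₀, α j = 1 - α j₀ := by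
      have := Finset.add_sum_erase Finset.univ α (Finset.mem_univ j₀)
      rw [hα_sum] at this
      linarith
    have hge : α j₀ * ρ (T z) + (1 - α j₀) * ρ z ≤ ∑ j : Fin n₀, α j * ρ (T^[(j : ℕ) + 1] z) := by
      rw [hsplit]
      have h1 : ∑ j ∈ Finset.univ.erase j₀, α j * ρ z
          ≤ ∑ j ∈ Finset.univ.erase j₀, α j * ρ (T^[(j : ℕ) + 1] z) :=
        Finset.sum_le_sum fun j _ => mul_le_mul_of_nonneg_left (hρz_le _) (hα_nonneg j)
      rw [← Finset.sum_mul] at h1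
      rw [hsum_erase] at h1
      linarith
    have hlt : ρ z < ρ (T z) := hopial (T z) hTz
    nlinarith [hα_first]
  -- Part (III): for fixed points z, the norms ‖u n - z‖ converge
  have hLim : ∀ z, z ∈ C → T z = z →
      ∃ L, Tendsto (fun n => ‖u n - z‖) atTop (𝓝 L) := by
    intro z hzC hfz
    set c : ℕ → ℝ := fun n => ‖u n - z‖ with hc
    set a : ℕ → ℝ := fun j => if h : j < n₀ then α ⟨j, h⟩ else 0 with ha
    set A : ℕ → ℝ := fun j => ∑ i ∈ Finset.Ico j n₀, a i with hA
    have ha_nonneg : ∀ j, 0 ≤ a j := by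
      intro j
      by_cases h : j < n₀ <;> simp [ha, h, hα_nonneg]
    have hA_nonneg : ∀ j, 0 ≤ A j := fun j => Finset.sum_nonneg fun i _ => ha_nonneg i
    have hA0 : A 0 = 1 := by
      show (∑ i ∈ Finset.Ico 0 n₀, a i) = 1
      rw [← Finset.range_eq_Ico, ← Fin.sum_univ_eq_sum_range a n₀]
      rw [← hα_sum]
      refine Finset.sum_congr rfl fun j _ => ?_
      simp [ha, j.isLt]
    have hAsucc : ∀ j, A j = a j + A (j + 1) := by
      intro j
      by_cases h : j < n₀
      · rw [hA]
        exact Finset.sum_eq_sum_Ico_succ_bot h a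
      · have h1 : Finset.Ico j n₀ = ∅ := Finset.Ico_eq_empty (by omega)
        have h2 : Finset.Ico (j + 1) n₀ = ∅ := Finset.Ico_eq_empty (by omega)
        simp [hA, h1, h2, ha, h]
    have hAn₀ : A n₀ = 0 := by simp [hA]
    set s : ℕ → ℝ := fun n => ∑ j ∈ Finset.range n₀, A j * c (n + j) with hs
    have hfix : ∀ m, T^[m] z = z := fun m => Function.iterate_fixed hfz m
    have hneK : ∀ n, ∑ j ∈ Finset.range n₀, a j * c (n + j + 1) ≤ c n := by
      intro n
      have hbase := hne (u n) (humem n) z hzC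
      calc ∑ j ∈ Finset.range n₀, a j * c (n + j + 1)
          = ∑ j : Fin n₀, a (j : ℕ) * c (n + (j : ℕ) + 1) :=
            (Fin.sum_univ_eq_sum_range (fun j => a j * c (n + j + 1)) n₀).symm
        _ = ∑ j : Fin n₀, α j * ‖T^[(j : ℕ) + 1] (u n) - T^[(j : ℕ) + 1] z‖ := by
            refine Finset.sum_congr rfl fun j _ => ?_
            rw [hfix ((j : ℕ) + 1), hiter n ((j : ℕ) + 1)]
            have h1 : a (j : ℕ) = α j := by simp [ha, j.isLt]
            have h2 : n + (j : ℕ) + 1 = n + ((j : ℕ) + 1) := by omega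
            rw [h1, h2]
        _ ≤ ‖u n - z‖ := hbase
    have htel : ∀ n, s n - s (n + 1) = c n - ∑ j ∈ Finset.range n₀, a j * c (n + j + 1) := by
      intro n
      have h1 : s n = (∑ j ∈ Finset.range n₀, A (j + 1) * c (n + (j + 1))) + A 0 * c (n + 0) := by
        show (∑ j ∈ Finset.range n₀, A j * c (n + j)) = _
        have he : ∑ j ∈ Finset.range n₀, A j * c (n + j)
            = ∑ j ∈ Finset.range (n₀ + 1), A j * c (n + j) := by
          rw [Finset.sum_range_succ, hAn₀, zero_mul, add_zero]
        rw [he, Finset.sum_range_succ']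
      have h2 : s (n + 1) = ∑ j ∈ Finset.range n₀,
          (a j * c (n + (j + 1)) + A (j + 1) * c (n + (j + 1))) := by
        show (∑ j ∈ Finset.range n₀, A j * c (n + 1 + j)) = _
        refine Finset.sum_congr rfl fun j _ => ?_
        have harg : n + 1 + j = n + (j + 1) := by omega
        rw [harg, hAsucc j, add_mul]
      rw [h1, h2, Finset.sum_add_distrib, hA0]
      have h3 : ∑ j ∈ Finset.range n₀, a j * c (n + (j + 1))
          = ∑ j ∈ Finset.range n₀, a j * c (n + j + 1) := by
        rfl
      rw [h3]
      simp only [Nat.add_zero]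
      ring
    have hmono : ∀ n, s (n + 1) ≤ s n := by
      intro n
      have h1 := hneK n
      have h2 := htel n
      linarith
    have hs_nonneg : ∀ n, 0 ≤ s n :=
      fun n => Finset.sum_nonneg fun j _ => mul_nonneg (hA_nonneg j) (norm_nonneg _)
    have hanti : Antitone s := antitone_nat_of_succ_le hmono
    have hbdd : BddBelow (Set.range s) := by
      refine ⟨0, fun t ht => ?_⟩
      obtain ⟨n, rfl⟩ := ht
      exact hs_nonneg n
    have hslim : Tendsto s atTop (𝓝 (⨅ n, s n)) := tendsto_atTop_ciInf hanti hbdd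
    set At : ℝ := ∑ j ∈ Finset.range n₀, A j with hAt
    have hAt1 : (1 : ℝ) ≤ At := by
      rw [hAt, ← hA0]
      exact Finset.single_le_sum (fun j _ => hA_nonneg j) (Finset.mem_range.mpr hn₀)
    have hAtpos : (0 : ℝ) < At := by linarith
    have he0 : Tendsto (fun n => s n - At * c n) atTop (𝓝 0) := by
      have hbound : ∀ n, ‖s n - At * c n‖ ≤ ∑ j ∈ Finset.range n₀, A j * ‖u (n + j) - u n‖ := by
        intro n
        have hrw : s n - At * c n = ∑ j ∈ Finset.range n₀, A j * (c (n + j) - c n) := by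
          simp only [hs, hAt, Finset.sum_mul, mul_sub, Finset.sum_sub_distrib]
        rw [hrw]
        calc ‖∑ j ∈ Finset.range n₀, A j * (c (n + j) - c n)‖
            ≤ ∑ j ∈ Finset.range n₀, ‖A j * (c (n + j) - c n)‖ := norm_sum_le _ _
          _ ≤ ∑ j ∈ Finset.range n₀, A j * ‖u (n + j) - u n‖ := by
              refine Finset.sum_le_sum fun j _ => ?_
              rw [norm_mul, Real.norm_eq_abs (A j), abs_of_nonneg (hA_nonneg j)]
              refine mul_le_mul_of_nonneg_left ?_ (hA_nonneg j)
              have hb := abs_norm_sub_norm_le (u (n + j) - z) (u n - z)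
              rw [sub_sub_sub_cancel_right] at hb
              exact hb
      have hg : Tendsto (fun n => ∑ j ∈ Finset.range n₀, A j * ‖u (n + j) - u n‖) atTop
          (𝓝 (∑ j ∈ Finset.range n₀, A j * 0)) := by
        refine tendsto_finset_sum _ fun j _ => ?_
        refine Tendsto.const_mul _ ?_
        have := hd j
        refine this.congr fun n => ?_
        rw [norm_sub_rev]
      rw [Finset.sum_congr rfl (fun j _ => mul_zero (A j)), Finset.sum_const, smul_zero] at hg
      exact squeeze_zero_norm hbound hg
    refine ⟨(⨅ n, s n) / At, ?_⟩
    have hcomb : Tendsto (fun n => (s n - (s n - At * c n)) / At) atTop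
        (𝓝 (((⨅ n, s n) - 0) / At)) := (hslim.sub he0).div_const At
    rw [sub_zero] at hcomb
    refine hcomb.congr fun n => ?_
    field_simp
    ring
  -- Final assembly
  obtain ⟨y, hyC, φ, hφ, hwy⟩ := aux_extraction C hC_wcompact u humem
  have hTy : T y = y := hKey φ hφ y hyC hwy
  obtain ⟨Ly, hLy⟩ := hLim y hyC hTy
  refine ⟨y, hyC, hTy, ?_⟩
  intro f
  by_contra hnot
  obtain ⟨ε, hε, hfreq⟩ : ∃ ε > 0, ∃ᶠ n in atTop, ε ≤ dist (f (u n)) (f y) := by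
    rw [Metric.tendsto_atTop] at hnot
    push_neg at hnot
    obtain ⟨ε, hεpos, hev⟩ := hnot
    exact ⟨ε, hεpos, frequently_atTop.mpr fun N => (hev N).imp fun n h => ⟨h.1, h.2⟩⟩
  obtain ⟨ψ, hψ, hψP⟩ := extraction_of_frequently_atTop hfreq
  obtain ⟨z, hzC, φ', hφ', hwz⟩ :=
    aux_extraction C hC_wcompact (fun k => u (ψ k)) fun k => humem _
  have hσmono : StrictMono fun k => ψ (φ' k) := hψ.comp hφ'
  have hwz' : WeakConvSeq (fun k => u (ψ (φ' k))) z := hwz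
  have hTz : T z = z := hKey _ hσmono z hzC hwz'
  obtain ⟨Lz, hLz⟩ := hLim z hzC hTz
  have hfzy : ε ≤ dist (f z) (f y) := by
    have h1 : Tendsto (fun k => dist (f (u (ψ (φ' k)))) (f y)) atTop (𝓝 (dist (f z) (f y))) :=
      (hwz' f).dist tendsto_const_nhds
    exact ge_of_tendsto h1 (Eventually.of_forall fun k => hψP (φ' k))
  have hzy : z ≠ y := by
    intro h
    rw [h, dist_self] at hfzy
    linarith
  have hyz : y ≠ z := fun h => hzy h.symm
  have hO1 : liminf (fun k => ‖u (φ k) - y‖) atTop < liminf (fun k => ‖u (φ k) - z‖) atTop :=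
    hC_opial (fun k => u (φ k)) y (fun k => humem _) hwy z hzy
  have hO2 : liminf (fun k => ‖u (ψ (φ' k)) - z‖) atTop
      < liminf (fun k => ‖u (ψ (φ' k)) - y‖) atTop :=
    hC_opial (fun k => u (ψ (φ' k))) z (fun k => humem _) hwz' y hyz
  have hT1 : Tendsto (fun k => ‖u (φ k) - y‖) atTop (𝓝 Ly) := hLy.comp hφ.tendsto_atTop
  have hT2 : Tendsto (fun k => ‖u (φ k) - z‖) atTop (𝓝 Lz) := hLz.comp hφ.tendsto_atTop
  have hT3 : Tendsto (fun k => ‖u (ψ (φ' k)) - z‖) atTop (𝓝 Lz) := hLz.comp hσmono.tendsto_atTop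
  have hT4 : Tendsto (fun k => ‖u (ψ (φ' k)) - y‖) atTop (𝓝 Ly) := hLy.comp hσmono.tendsto_atTop
  rw [hT1.liminf_eq, hT2.liminf_eq] at hO1
  rw [hT3.liminf_eq, hT4.liminf_eq] at hO2
  linarith
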